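/- Let G be a finite simple graph with nonempty vertex set V. Define the bipartite graph G' whose vertex set consists of five disjoint copies A1, A2, A3, A4, A5 of V (writing a_{i,u} for the copy of u ∈ V in A_i), with left part A1 ∪ A2 ∪ A3 and right part A4 ∪ A5, and whose edges are: a_{1,u} ~ a_{4,u} for every u; a_{3,u} ~ a_{5,u} for every u; a_{2,u} ~ a_{4,v} whenever u ~_G v; a_{2,u} ~ a_{5,v} whenever u = v or u ~_G v; and no other edges. Then 2 · (min over nonempty D ⊆ V of |D ∪ Odd_G(D)|) = min over nonempty D' ⊆ A1 ∪ A2 ∪ A3 with Odd_{G'}(D') = ∅ of |D'|. -/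

import Mathlib

open Finset

open Classical in
/-- The odd-neighbourhood of `D` in `G`: vertices having an odd number of neighbours in `D`. -/
noncomputable def oddNbhd {V : Type*} [Fintype V] (G : SimpleGraph V) (D : Finset V) :
    Finset V :=
  Finset.univ.filter fun v => Odd ((D.filter fun u => G.Adj v u).card)

/-- The bipartite gadget graph `G'` on five copies of `V` (copy `i` of `u ∈ V` is `(i, u)`;
`A1, …, A5` correspond to indices `0, …, 4`): edges are `a_{1,u} ~ a_{4,u}`,
`a_{3,u} ~ a_{5,u}`, `a_{2,u} ~ a_{4,v}` whenever `u ~_G v`, and `a_{2,u} ~ a_{5,v}` whenever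
`u = v` or `u ~_G v`. -/
def gadget {V : Type*} (G : SimpleGraph V) : SimpleGraph (Fin 5 × V) :=
  SimpleGraph.fromRel fun x y =>
    (x.1 = 0 ∧ y.1 = 3 ∧ x.2 = y.2) ∨
    (x.1 = 2 ∧ y.1 = 4 ∧ x.2 = y.2) ∨
    (x.1 = 1 ∧ y.1 = 3 ∧ G.Adj x.2 y.2) ∨
    (x.1 = 1 ∧ y.1 = 4 ∧ (x.2 = y.2 ∨ G.Adj x.2 y.2))

section
variable {V : Type*} [Fintype V] [DecidableEq V] (G : SimpleGraph V)
open Classical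

lemma gadget_adj3 (v : V) (i : Fin 5) (u : V) :
    (gadget G).Adj (3, v) (i, u) ↔ (i = 0 ∧ u = v) ∨ (i = 1 ∧ G.Adj v u) := by
  simp only [gadget, SimpleGraph.fromRel_adj, ne_eq, Prod.mk.injEq, not_and]
  fin_cases i <;> simp [G.adj_comm] <;> try tauto

lemma gadget_adj4 (v : V) (i : Fin 5) (u : V) :
    (gadget G).Adj (4, v) (i, u) ↔ (i = 2 ∧ u = v) ∨ (i = 1 ∧ (u = v ∨ G.Adj v u)) := by
  simp only [gadget, SimpleGraph.fromRel_adj, ne_eq, Prod.mk.injEq, not_and]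
  fin_cases i <;> simp [G.adj_comm] <;> try tauto

lemma gadget_not_adj_left (x y : Fin 5 × V) (hx : x.1 = 0 ∨ x.1 = 1 ∨ x.1 = 2)
    (hy : y.1 = 0 ∨ y.1 = 1 ∨ y.1 = 2) : ¬ (gadget G).Adj x y := by
  simp only [gadget, SimpleGraph.fromRel_adj, ne_eq]
  rintro ⟨-, h | h⟩ <;> rcases h with ⟨h1,h2,-⟩|⟨h1,h2,-⟩|⟨h1,h2,-⟩|⟨h1,h2,-⟩ <;>
    rcases hx with h3|h3|h3 <;> rcases hy with h4|h4|h4 <;> simp_all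

end

section
variable {V : Type*} [Fintype V] [DecidableEq V] (G : SimpleGraph V)
open Classical

lemma mem_oddNbhd {D : Finset V} {v : V} :
    v ∈ oddNbhd G D ↔ Odd ((D.filter fun u => G.Adj v u).card) := by
  simp [oddNbhd]

lemma gadget_filter3 (X D Y : Finset V) (v : V) :
    ((X.image (fun u => ((0:Fin 5), u)) ∪ D.image (fun u => ((1:Fin 5), u)) ∪
        Y.image (fun u => ((2:Fin 5), u))).filter fun y => (gadget G).Adj (3, v) y) =
      (X.filter (fun u => u = v)).image (fun u => ((0:Fin 5), u)) ∪
        (D.filter (fun u => G.Adj v u)).image (fun u => ((1:Fin 5), u)) := by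
  ext ⟨i, u⟩
  simp only [mem_filter, mem_union, mem_image, gadget_adj3, Prod.mk.injEq]
  aesop

lemma gadget_filter4 (X D Y : Finset V) (v : V) :
    ((X.image (fun u => ((0:Fin 5), u)) ∪ D.image (fun u => ((1:Fin 5), u)) ∪
        Y.image (fun u => ((2:Fin 5), u))).filter fun y => (gadget G).Adj (4, v) y) =
      (Y.filter (fun u => u = v)).image (fun u => ((2:Fin 5), u)) ∪
        (D.filter (fun u => u = v ∨ G.Adj v u)).image (fun u => ((1:Fin 5), u)) := by
  ext ⟨i, u⟩
  simp only [mem_filter, mem_union, mem_image, gadget_adj4, Prod.mk.injEq]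
  aesop

lemma card_union_images (A B : Finset V) (i j : Fin 5) (hij : i ≠ j) :
    ((A.image (fun u => (i, u))) ∪ (B.image (fun u => (j, u)))).card = A.card + B.card := by
  rw [card_union_of_disjoint, card_image_of_injective _ (Prod.mk_right_injective i),
    card_image_of_injective _ (Prod.mk_right_injective j)]
  simp only [disjoint_left, mem_image]
  rintro ⟨a, b⟩ ⟨x, hx, h⟩ ⟨y, hy, h'⟩
  rw [← h'] at h
  exact hij (congrArg Prod.fst h)

end

section
variable {V : Type*} [Fintype V] [DecidableEq V] (G : SimpleGraph V)
open Classical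

lemma oddNbhd_eq_empty_iff {W : Type*} [Fintype W] (H : SimpleGraph W) (s : Finset W) :
    oddNbhd H s = ∅ ↔ ∀ x, Even ((s.filter fun u => H.Adj x u).card) := by
  simp [oddNbhd, filter_eq_empty_iff, Nat.not_odd_iff_even]

lemma count_split (D : Finset V) (v : V) :
    (D.filter (fun u => u = v ∨ G.Adj v u)).card =
      (if v ∈ D then 1 else 0) + (D.filter (fun u => G.Adj v u)).card := by
  rw [filter_or, card_union_of_disjoint, filter_eq']
  · split_ifs <;> simp
  · simp only [disjoint_left, mem_filter]
    rintro a ⟨-, rfl⟩ ⟨-, h⟩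
    exact G.irrefl h

lemma key (X D Y : Finset V) :
    oddNbhd (gadget G) (X.image (fun u => ((0:Fin 5), u)) ∪ D.image (fun u => ((1:Fin 5), u)) ∪
        Y.image (fun u => ((2:Fin 5), u))) = ∅ ↔
      X = oddNbhd G D ∧ Y = (D ∪ oddNbhd G D) \ (D ∩ oddNbhd G D) := by
  rw [oddNbhd_eq_empty_iff]
  have hleft : ∀ y ∈ X.image (fun u => ((0:Fin 5), u)) ∪ D.image (fun u => ((1:Fin 5), u)) ∪
      Y.image (fun u => ((2:Fin 5), u)), y.1 = 0 ∨ y.1 = 1 ∨ y.1 = 2 := by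
    intro y hy
    simp only [mem_union, mem_image] at hy
    rcases hy with (⟨a, _, h⟩ | ⟨a, _, h⟩) | ⟨a, _, h⟩ <;> rw [← h] <;> simp
  constructor
  · intro hEven
    constructor
    · ext v
      have h := hEven (3, v)
      rw [gadget_filter3, card_union_images _ _ _ _ (by decide), filter_eq'] at h
      rw [mem_oddNbhd]
      rw [Nat.even_iff] at h
      by_cases hX : v ∈ X <;> simp_all [Nat.odd_iff] <;> omega
    · ext v
      have h := hEven (4, v)
      rw [gadget_filter4, card_union_images _ _ _ _ (by decide), filter_eq',
        count_split] at h
      rw [Nat.even_iff] at h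
      simp only [mem_sdiff, mem_union, mem_inter, mem_oddNbhd]
      by_cases hY : v ∈ Y <;> by_cases hD : v ∈ D <;> simp_all [Nat.odd_iff] <;> omega
  · rintro ⟨hX, hY⟩ x
    have hL : ∀ x : Fin 5 × V, x.1 = 0 ∨ x.1 = 1 ∨ x.1 = 2 →
        Even (((X.image (fun u => ((0:Fin 5), u)) ∪ D.image (fun u => ((1:Fin 5), u)) ∪
          Y.image (fun u => ((2:Fin 5), u))).filter fun u => (gadget G).Adj x u).card) := by
      intro x hx
      rw [filter_false_of_mem fun y hy => gadget_not_adj_left G x y hx (hleft y hy)]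
      simp
    have h3 : ∀ v : V,
        Even (((X.image (fun u => ((0:Fin 5), u)) ∪ D.image (fun u => ((1:Fin 5), u)) ∪
          Y.image (fun u => ((2:Fin 5), u))).filter fun u =>
            (gadget G).Adj ((3:Fin 5), v) u).card) := by
      intro v
      rw [gadget_filter3, card_union_images _ _ _ _ (by decide), filter_eq', Nat.even_iff]
      have hXv : v ∈ X ↔ Odd ((D.filter fun u => G.Adj v u).card) := by
        rw [hX, mem_oddNbhd]
      clear hL hleft hY hX
      by_cases hv : v ∈ X <;> simp_all [Nat.odd_iff] <;> omega
    have h4 : ∀ v : V,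
        Even (((X.image (fun u => ((0:Fin 5), u)) ∪ D.image (fun u => ((1:Fin 5), u)) ∪
          Y.image (fun u => ((2:Fin 5), u))).filter fun u =>
            (gadget G).Adj ((4:Fin 5), v) u).card) := by
      intro v
      rw [gadget_filter4, card_union_images _ _ _ _ (by decide), filter_eq',
        count_split, Nat.even_iff]
      have hYv : v ∈ Y ↔ v ∈ (D ∪ oddNbhd G D) \ (D ∩ oddNbhd G D) := by rw [hY]
      rw [mem_sdiff, mem_union, mem_inter, mem_oddNbhd] at hYv
      clear hL h3 hleft hY hX
      by_cases hv : v ∈ Y <;> by_cases hD : v ∈ D <;> simp_all [Nat.odd_iff] <;> omega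
    obtain ⟨i, v⟩ := x
    fin_cases i
    · exact hL _ (by simp)
    · exact hL _ (by simp)
    · exact hL _ (by simp)
    · exact h3 v
    · exact h4 v

end

section
variable {V : Type*} [Fintype V] [DecidableEq V] (G : SimpleGraph V)
open Classical

lemma disj_images (A B : Finset V) (i j : Fin 5) (hij : i ≠ j) :
    Disjoint (A.image (fun u => (i, u))) (B.image (fun u => (j, u))) := by
  simp only [disjoint_left, mem_image]
  rintro ⟨a, b⟩ ⟨x, hx, h⟩ ⟨y, hy, h'⟩
  rw [← h'] at h
  exact hij (congrArg Prod.fst h)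

lemma card_triple (X D Y : Finset V) :
    (X.image (fun u => ((0:Fin 5), u)) ∪ D.image (fun u => ((1:Fin 5), u)) ∪
      Y.image (fun u => ((2:Fin 5), u))).card = X.card + D.card + Y.card := by
  rw [card_union_of_disjoint, card_union_images _ _ _ _ (by decide),
    card_image_of_injective _ (Prod.mk_right_injective (2:Fin 5))]
  exact disjoint_union_left.mpr
    ⟨disj_images _ _ _ _ (by decide), disj_images _ _ _ _ (by decide)⟩

lemma left_repr (D' : Finset (Fin 5 × V)) (h : ∀ x ∈ D', x.1 = 0 ∨ x.1 = 1 ∨ x.1 = 2) :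
    D' = ((D'.filter (fun x => x.1 = 0)).image Prod.snd).image (fun u => ((0:Fin 5), u)) ∪
         ((D'.filter (fun x => x.1 = 1)).image Prod.snd).image (fun u => ((1:Fin 5), u)) ∪
         ((D'.filter (fun x => x.1 = 2)).image Prod.snd).image (fun u => ((2:Fin 5), u)) := by
  ext ⟨i, u⟩
  simp only [mem_union, mem_image, mem_filter, Prod.mk.injEq, Prod.ext_iff]
  constructor
  · intro hm
    rcases h _ hm with hi | hi | hi
    · exact Or.inl (Or.inl ⟨u, ⟨⟨i, u⟩, ⟨hm, hi⟩, rfl⟩, hi.symm, rfl⟩)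
    · exact Or.inl (Or.inr ⟨u, ⟨⟨i, u⟩, ⟨hm, hi⟩, rfl⟩, hi.symm, rfl⟩)
    · exact Or.inr ⟨u, ⟨⟨i, u⟩, ⟨hm, hi⟩, rfl⟩, hi.symm, rfl⟩
  · rintro ((⟨a, ⟨x, ⟨hx, hx1⟩, hxa⟩, hi, ha⟩ | ⟨a, ⟨x, ⟨hx, hx1⟩, hxa⟩, hi, ha⟩) |
      ⟨a, ⟨x, ⟨hx, hx1⟩, hxa⟩, hi, ha⟩) <;>
    · have : x = (i, u) := Prod.ext (by rw [hx1, ← hi]) (by rw [hxa, ha])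
      rwa [this] at hx

lemma oddNbhd_empty' : oddNbhd G (∅ : Finset V) = ∅ := by
  simp [oddNbhd]

lemma two_mul_card (D : Finset V) :
    (oddNbhd G D).card + D.card +
      ((D ∪ oddNbhd G D) \ (D ∩ oddNbhd G D)).card = 2 * (D ∪ oddNbhd G D).card := by
  have h1 := card_union_add_card_inter D (oddNbhd G D)
  have h2 : ((D ∪ oddNbhd G D) \ (D ∩ oddNbhd G D)).card =
      (D ∪ oddNbhd G D).card - (D ∩ oddNbhd G D).card :=
    card_sdiff_of_subset ((inter_subset_left).trans subset_union_left)
  have h3 : (D ∩ oddNbhd G D).card ≤ (D ∪ oddNbhd G D).card :=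
    card_le_card ((inter_subset_left).trans subset_union_left)
  omega

end


/-- Twice the minimum of `|D ∪ Odd_G(D)|` over nonempty `D ⊆ V` equals the minimum size of a
nonempty `D' ⊆ A1 ∪ A2 ∪ A3` (the left part of the gadget graph `G'`) with
`Odd_{G'}(D') = ∅`. -/
theorem gadget_even_set {V : Type*} [Fintype V] [DecidableEq V] [Nonempty V]
    (G : SimpleGraph V) :
    2 * sInf {m : ℕ | ∃ D : Finset V, D.Nonempty ∧ (D ∪ oddNbhd G D).card = m} =
      sInf {m : ℕ | ∃ D' : Finset (Fin 5 × V), D'.Nonempty ∧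
        (∀ x ∈ D', x.1 = 0 ∨ x.1 = 1 ∨ x.1 = 2) ∧
        oddNbhd (gadget G) D' = ∅ ∧ D'.card = m} := by
  classical
  set S1 := {m : ℕ | ∃ D : Finset V, D.Nonempty ∧ (D ∪ oddNbhd G D).card = m} with hS1
  set S2 := {m : ℕ | ∃ D' : Finset (Fin 5 × V), D'.Nonempty ∧
      (∀ x ∈ D', x.1 = 0 ∨ x.1 = 1 ∨ x.1 = 2) ∧
      oddNbhd (gadget G) D' = ∅ ∧ D'.card = m} with hS2
  -- forward construction
  have mem2 : ∀ D : Finset V, D.Nonempty → 2 * (D ∪ oddNbhd G D).card ∈ S2 := by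
    intro D hD
    refine ⟨(oddNbhd G D).image (fun u => ((0:Fin 5), u)) ∪ D.image (fun u => ((1:Fin 5), u)) ∪
      ((D ∪ oddNbhd G D) \ (D ∩ oddNbhd G D)).image (fun u => ((2:Fin 5), u)), ?_, ?_, ?_, ?_⟩
    · obtain ⟨v, hv⟩ := hD
      refine ⟨((1:Fin 5), v), ?_⟩
      simp only [mem_union, mem_image]
      exact Or.inl (Or.inr ⟨v, hv, rfl⟩)
    · intro x hx
      simp only [mem_union, mem_image] at hx
      rcases hx with (⟨a, _, h⟩ | ⟨a, _, h⟩) | ⟨a, _, h⟩ <;> rw [← h] <;> simp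
    · exact (key G _ D _).mpr ⟨rfl, rfl⟩
    · rw [card_triple, two_mul_card]
  have h1ne : S1.Nonempty := by
    obtain ⟨v⟩ := ‹Nonempty V›
    exact ⟨_, ⟨{v}, singleton_nonempty v, rfl⟩⟩
  have h2ne : S2.Nonempty := by
    obtain ⟨v⟩ := ‹Nonempty V›
    exact ⟨_, mem2 {v} (singleton_nonempty v)⟩
  apply le_antisymm
  · -- 2 * sInf S1 ≤ sInf S2
    obtain ⟨D', hne, hl, hodd, hcard⟩ := Nat.sInf_mem h2ne
    have hrepr := left_repr D' hl
    set Xs := (D'.filter (fun x => x.1 = 0)).image Prod.snd with hXs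
    set Ds := (D'.filter (fun x => x.1 = 1)).image Prod.snd with hDs
    set Ys := (D'.filter (fun x => x.1 = 2)).image Prod.snd with hYs
    rw [hrepr] at hodd hcard
    obtain ⟨hX, hY⟩ := (key G Xs Ds Ys).mp hodd
    have hDs : Ds.Nonempty := by
      rcases Ds.eq_empty_or_nonempty with h | h
      · exfalso
        rw [h, oddNbhd_empty'] at hX
        rw [h, oddNbhd_empty'] at hY
        simp only [union_empty, inter_empty, empty_union, sdiff_empty] at hY
        rw [hrepr, hX, hY, h] at hne
        simp at hne
      · exact h
    have : sInf S1 ≤ (Ds ∪ oddNbhd G Ds).card := Nat.sInf_le ⟨Ds, hDs, rfl⟩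
    calc 2 * sInf S1 ≤ 2 * (Ds ∪ oddNbhd G Ds).card := by omega
      _ = sInf S2 := by rw [← hcard, card_triple, hX, hY, two_mul_card]
  · -- sInf S2 ≤ 2 * sInf S1
    obtain ⟨D, hD, hcard⟩ := Nat.sInf_mem h1ne
    calc sInf S2 ≤ 2 * (D ∪ oddNbhd G D).card := Nat.sInf_le (mem2 D hD)
      _ = 2 * sInf S1 := by rw [hcard]
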